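/- Let ε, ζ be Hermitian positive-definite 3×3 complex matrices with smallest eigenvalue ≥ c₀ > 0, and let k ∈ ℂ with |k| ≥ 1 and Im k ≥ 0, k ≠ 0. Then there exists a unimodular α_k ∈ ℂ such that for all w ∈ ℂ³: Re(α_k k² ⟨εw, w⟩) ≥ c·|k|²·‖w‖² and Re(α_k i k ⟨ζw, w⟩) ≥ c·|k|·‖w‖², where c > 0 depends only on c₀ (and not on k). -/

import Mathlib

open Complex

lemma herm_im_zero' (M : Matrix (Fin 3) (Fin 3) ℂ) (hM : M.IsHermitian) (w : Fin 3 → ℂ) :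
    (∑ i, M.mulVec w i * star (w i)).im = 0 := by
  have h : (starRingEnd ℂ) (∑ i, M.mulVec w i * star (w i))
      = ∑ i, M.mulVec w i * star (w i) := by
    simp only [map_sum, map_mul, Matrix.mulVec, dotProduct, map_sum, map_mul,
      Finset.sum_mul, Finset.mul_sum]
    rw [Finset.sum_comm]
    refine Finset.sum_congr rfl fun i _ => Finset.sum_congr rfl fun j _ => ?_
    have hij : (starRingEnd ℂ) (M j i) = M i j := congrFun (congrFun hM i) j
    rw [← hij]
    simp only [starRingEnd_apply, star_star]
    ring
  exact Complex.conj_eq_iff_im.mp h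

lemma re_mul_aux (r s : ℝ) (S : ℂ) (hS : S.im = 0) :
    (((r : ℂ) * Complex.exp ((s : ℂ) * I)) * S).re = r * Real.cos s * S.re := by
  rw [Complex.mul_re]
  have h1 : ((r : ℂ) * Complex.exp ((s : ℂ) * I)).re = r * Real.cos s := by
    simp [Complex.exp_mul_I, Complex.mul_re, Complex.mul_im, Complex.cos_ofReal_re,
      Complex.sin_ofReal_re, Complex.cos_ofReal_im, Complex.sin_ofReal_im]
  have h2 : ((r : ℂ) * Complex.exp ((s : ℂ) * I)).im = r * Real.sin s := by
    simp [Complex.exp_mul_I, Complex.mul_re, Complex.mul_im, Complex.cos_ofReal_re,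
      Complex.sin_ofReal_re, Complex.cos_ofReal_im, Complex.sin_ofReal_im]
  rw [h1, h2, hS]
  ring

lemma re_mul_I_aux (r s : ℝ) (S : ℂ) (hS : S.im = 0) :
    (((r : ℂ) * Complex.exp ((s : ℂ) * I) * I) * S).re = -(r * Real.sin s) * S.re := by
  rw [Complex.mul_re]
  have h1 : ((r : ℂ) * Complex.exp ((s : ℂ) * I) * I).re = -(r * Real.sin s) := by
    simp [Complex.exp_mul_I, Complex.mul_re, Complex.mul_im, Complex.cos_ofReal_re,
      Complex.sin_ofReal_re, Complex.cos_ofReal_im, Complex.sin_ofReal_im]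
  have h2 : ((r : ℂ) * Complex.exp ((s : ℂ) * I) * I).im = r * Real.cos s := by
    simp [Complex.exp_mul_I, Complex.mul_re, Complex.mul_im, Complex.cos_ofReal_re,
      Complex.sin_ofReal_re, Complex.cos_ofReal_im, Complex.sin_ofReal_im]
  rw [h1, h2, hS]
  ring

open Complex in
/-- Rotated simultaneous coercivity of the `ε` volume term and the `ζ` impedance term
for Hermitian positive-definite coefficients and wavenumbers in the closed upper
half-plane with `|k| ≥ 1`. The constant `c` depends only on `c₀`. -/
theorem stmt_16 (c₀ : ℝ) (hc₀ : 0 < c₀) :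
    ∃ c > (0 : ℝ), ∀ (ε ζ : Matrix (Fin 3) (Fin 3) ℂ),
      ε.IsHermitian → ζ.IsHermitian →
      (∀ w : Fin 3 → ℂ, c₀ * ∑ i, Complex.normSq (w i) ≤
        (∑ i, ε.mulVec w i * star (w i)).re) →
      (∀ w : Fin 3 → ℂ, c₀ * ∑ i, Complex.normSq (w i) ≤
        (∑ i, ζ.mulVec w i * star (w i)).re) →
      ∀ k : ℂ, 1 ≤ ‖k‖ → 0 ≤ k.im → k ≠ 0 →
      ∃ αk : ℂ, ‖αk‖ = 1 ∧
        (∀ w : Fin 3 → ℂ,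
          c * ‖k‖ ^ 2 * ∑ i, Complex.normSq (w i) ≤
            (αk * k ^ 2 * ∑ i, ε.mulVec w i * star (w i)).re) ∧
        (∀ w : Fin 3 → ℂ,
          c * ‖k‖ * ∑ i, Complex.normSq (w i) ≤
            (αk * Complex.I * k * ∑ i, ζ.mulVec w i * star (w i)).re) := by
  refine ⟨c₀ / 2, by positivity, fun ε ζ hε hζ hεc hζc k hk1 hkim hk0 => ?_⟩
  set θ := k.arg with hθ
  have hθ0 : 0 ≤ θ := Complex.arg_nonneg_iff.mpr hkim
  have hθπ : θ ≤ Real.pi := Complex.arg_le_pi k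
  have hπ := Real.pi_pos
  set t : ℝ := -(3 * θ / 2 + Real.pi / 4) with ht
  set a : ℝ := ‖k‖ with ha
  have hkeq : (a : ℂ) * Complex.exp ((θ : ℂ) * I) = k :=
    Complex.norm_mul_exp_arg_mul_I k
  have hk0' : (0 : ℝ) ≤ a := norm_nonneg k
  have hcos : (1 : ℝ) / 2 ≤ Real.cos (θ / 2 - Real.pi / 4) := by
    rw [← Real.cos_abs]
    calc (1 : ℝ) / 2 = Real.cos (Real.pi / 3) := by rw [Real.cos_pi_div_three]
      _ ≤ Real.cos |θ / 2 - Real.pi / 4| := by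
          apply Real.cos_le_cos_of_nonneg_of_le_pi (abs_nonneg _)
          · nlinarith
          · rw [abs_le]
            constructor <;> nlinarith
  refine ⟨Complex.exp ((t : ℂ) * I), Complex.norm_exp_ofReal_mul_I t, ?_, ?_⟩
  · -- ε volume term
    intro w
    have hN : (0 : ℝ) ≤ ∑ i, Complex.normSq (w i) :=
      Finset.sum_nonneg fun i _ => Complex.normSq_nonneg _
    have hS := hεc w
    have hSim := herm_im_zero' ε hε w
    set S := ∑ i, ε.mulVec w i * star (w i) with hSdef
    have hSpos : 0 ≤ S.re := le_trans (by positivity) hS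
    have hz : Complex.exp ((t : ℂ) * I) * k ^ 2
        = ((a ^ 2 : ℝ) : ℂ) * Complex.exp (((θ / 2 - Real.pi / 4 : ℝ) : ℂ) * I) := by
      rw [← hkeq,
        show Complex.exp ((t:ℂ) * I) * ((a : ℂ) * Complex.exp ((θ:ℂ) * I)) ^ 2
          = ((a ^ 2 : ℝ) : ℂ) * (Complex.exp ((θ:ℂ) * I) * Complex.exp ((θ:ℂ) * I)
              * Complex.exp ((t:ℂ) * I)) by push_cast; ring,
        ← Complex.exp_add, ← Complex.exp_add]
      congr 2
      rw [ht]; push_cast; ring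
    rw [mul_assoc, hz, mul_assoc, ← mul_assoc ((a ^ 2 : ℝ) : ℂ), re_mul_aux _ _ S hSim]
    nlinarith [mul_le_mul_of_nonneg_left hS (sq_nonneg a),
      mul_nonneg (mul_nonneg (sq_nonneg a) hSpos)
        (by linarith : (0:ℝ) ≤ Real.cos (θ / 2 - Real.pi / 4) - 1 / 2)]
  · -- ζ impedance term
    intro w
    have hN : (0 : ℝ) ≤ ∑ i, Complex.normSq (w i) :=
      Finset.sum_nonneg fun i _ => Complex.normSq_nonneg _
    have hS := hζc w
    have hSim := herm_im_zero' ζ hζ w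
    set S := ∑ i, ζ.mulVec w i * star (w i) with hSdef
    have hSpos : 0 ≤ S.re := le_trans (by positivity) hS
    have hz : Complex.exp ((t : ℂ) * I) * I * k
        = (a : ℂ) * Complex.exp (((t + θ : ℝ) : ℂ) * I) * I := by
      rw [← hkeq,
        show Complex.exp ((t:ℂ) * I) * I * ((a : ℂ) * Complex.exp ((θ:ℂ) * I))
          = (a : ℂ) * (Complex.exp ((t:ℂ) * I) * Complex.exp ((θ:ℂ) * I)) * I by ring,
        ← Complex.exp_add]
      have harg : (t : ℂ) * I + (θ : ℂ) * I = ((t + θ : ℝ) : ℂ) * I := by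
        push_cast; ring
      rw [harg]
    rw [hz, re_mul_I_aux _ _ S hSim]
    have hsin : -Real.sin (t + θ) = Real.cos (θ / 2 - Real.pi / 4) := by
      rw [ht, show -(3 * θ / 2 + Real.pi / 4) + θ = -(θ / 2 - Real.pi / 4 + Real.pi / 2) by ring,
        Real.sin_neg, neg_neg, Real.sin_add_pi_div_two]
    nlinarith [mul_le_mul_of_nonneg_left hS hk0',
      mul_nonneg (mul_nonneg hk0' hSpos)
        (by linarith : (0:ℝ) ≤ -Real.sin (t + θ) - 1 / 2)]
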